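/- arXiv:1105.2548 — 4 statements merged into one kernel-verified Lean document; each statement's English description precedes it below -/
import Mathlib

section
/- For any bipartite density operator ρ_AB and any product projective measurement as above, the quantity I(ρ_AB) − I(Φ_AB(ρ_AB)) equals S(ρ_AB ‖ Φ_AB(ρ_AB)) − S(ρ_A ‖ Φ_A(ρ_A)) − S(ρ_B ‖ Φ_B(ρ_B)). -/
open scoped Kronecker
open Matrix
open scoped ComplexOrder

/-- Matrix logarithm (base 2) of a Hermitian matrix, via its spectral decomposition;
junk value `0` on non-Hermitian input.  `Real.logb 2 0 = 0` encodes the usual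
`0 log 0 = 0` convention. -/
noncomputable def matLog2 {n : Type*} [Fintype n] [DecidableEq n] (A : Matrix n n ℂ) :
    Matrix n n ℂ :=
  if hA : A.IsHermitian then
    (hA.eigenvectorUnitary : Matrix n n ℂ) *
      Matrix.diagonal (fun i => (Real.logb 2 (hA.eigenvalues i) : ℂ)) *
      (star (hA.eigenvectorUnitary : Matrix n n ℂ))
  else 0

/-- von Neumann entropy (base-2): `S(ρ) = -Tr(ρ log₂ ρ)`. -/
noncomputable def vN {n : Type*} [Fintype n] [DecidableEq n] (ρ : Matrix n n ℂ) : ℝ :=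
  -(Matrix.trace (ρ * matLog2 ρ)).re

/-- Quantum relative entropy (base-2): `S(ρ‖σ) = Tr(ρ log₂ ρ) - Tr(ρ log₂ σ)`. -/
noncomputable def relEnt {n : Type*} [Fintype n] [DecidableEq n] (ρ σ : Matrix n n ℂ) : ℝ :=
  (Matrix.trace (ρ * matLog2 ρ)).re - (Matrix.trace (ρ * matLog2 σ)).re

/-- A density operator: positive semidefinite with unit trace. -/
noncomputable def IsDensity {n : Type*} [Fintype n] [DecidableEq n] (ρ : Matrix n n ℂ) : Prop :=
  ρ.PosSemidef ∧ ρ.trace = 1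

/-- Partial trace over the second (B) factor. -/
noncomputable def ptrB {m n : Type*} [Fintype n] (ρ : Matrix (m × n) (m × n) ℂ) : Matrix m m ℂ :=
  Matrix.of fun a b => ∑ j : n, ρ (a, j) (b, j)

/-- Partial trace over the first (A) factor. -/
noncomputable def ptrA {m n : Type*} [Fintype m] (ρ : Matrix (m × n) (m × n) ℂ) : Matrix n n ℂ :=
  Matrix.of fun a b => ∑ i : m, ρ (i, a) (i, b)

/-- A complete orthonormal family of rank-one projectors (a rank-one von Neumann
measurement): Hermitian idempotents, mutually orthogonal, summing to the identity,
each of unit trace (rank one). -/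
def MeasFam {ι n : Type*} [Fintype ι] [Fintype n] [DecidableEq n]
    (P : ι → Matrix n n ℂ) : Prop :=
  (∀ i, (P i).IsHermitian) ∧ (∀ i, P i * P i = P i) ∧
    (∀ i j, i ≠ j → P i * P j = 0) ∧ (∑ i, P i = 1) ∧ (∀ i, (P i).trace = 1)

/-- Pinching (non-selective projective measurement) channel. -/
noncomputable def pinch {ι n : Type*} [Fintype ι] [Fintype n] (P : ι → Matrix n n ℂ)
    (ρ : Matrix n n ℂ) : Matrix n n ℂ :=
  ∑ i, P i * ρ * P i

variable {m n ι κ : Type*} [Fintype m] [DecidableEq m] [Fintype n] [DecidableEq n]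
  [Fintype ι] [Fintype κ]

/-- The product measurement channel `Φ_AB`. -/
noncomputable def PhiAB (PA : ι → Matrix m m ℂ) (PB : κ → Matrix n n ℂ)
    (ρ : Matrix (m × n) (m × n) ℂ) : Matrix (m × n) (m × n) ℂ :=
  ∑ j, ∑ k, (PA j ⊗ₖ PB k) * ρ * (PA j ⊗ₖ PB k)

/-- Quantum mutual information `I(ρ) = S(ρ_A) + S(ρ_B) - S(ρ)`. -/
noncomputable def mutInfo (ρ : Matrix (m × n) (m × n) ℂ) : ℝ :=
  vN (ptrB ρ) + vN (ptrA ρ) - vN ρ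

/-! ### Auxiliary lemmas -/

section AuxLog
variable {d : Type*} [Fintype d] [DecidableEq d]

open Polynomial in
lemma aeval_unitary_conj (U : Matrix.unitaryGroup d ℂ) (D : Matrix d d ℂ) (p : ℂ[X]) :
    aeval ((U : Matrix d d ℂ) * D * star (U : Matrix d d ℂ)) p
      = (U : Matrix d d ℂ) * aeval D p * star (U : Matrix d d ℂ) := by
  have hUs : (U : Matrix d d ℂ) * star (U : Matrix d d ℂ) = 1 :=
    Matrix.mem_unitaryGroup_iff.mp U.2
  have hsU : star (U : Matrix d d ℂ) * (U : Matrix d d ℂ) = 1 :=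
    Matrix.UnitaryGroup.star_mul_self U
  induction p using Polynomial.induction_on' with
  | add p q hp hq => simp [map_add, hp, hq, mul_add, add_mul]
  | monomial k a =>
    have hpow : ∀ k : ℕ, ((U : Matrix d d ℂ) * D * star (U : Matrix d d ℂ))^k
        = (U : Matrix d d ℂ) * D^k * star (U : Matrix d d ℂ) := by
      intro k; induction k with
      | zero => simp [hUs]
      | succ k ih =>
        rw [pow_succ, ih, pow_succ]
        calc (U : Matrix d d ℂ) * D ^ k * star (U : Matrix d d ℂ) *
              ((U : Matrix d d ℂ) * D * star (U : Matrix d d ℂ))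
            = (U : Matrix d d ℂ) * D ^ k * (star (U : Matrix d d ℂ) *
              (U : Matrix d d ℂ)) * D * star (U : Matrix d d ℂ) := by
              simp only [Matrix.mul_assoc]
          _ = (U : Matrix d d ℂ) * (D ^ k * D) * star (U : Matrix d d ℂ) := by
              rw [hsU]; simp only [Matrix.mul_assoc, Matrix.mul_one]
    simp only [aeval_monomial, hpow]
    rw [Algebra.algebraMap_eq_smul_one]
    simp [Matrix.smul_mul, Matrix.mul_smul]

open Polynomial in
lemma aeval_diagonal' (v : d → ℂ) (p : ℂ[X]) :
    aeval (Matrix.diagonal v) p = Matrix.diagonal (fun i => p.eval (v i)) := by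
  induction p using Polynomial.induction_on' with
  | add p q hp hq => simp [map_add, hp, hq, Matrix.diagonal_add]
  | monomial k a =>
    simp [aeval_monomial, Matrix.algebraMap_eq_diagonal, Matrix.diagonal_pow,
      Matrix.diagonal_mul_diagonal, eval_monomial]

open Polynomial in
lemma matLog2_eq_aeval {A : Matrix d d ℂ} (hA : A.IsHermitian) :
    ∃ p : ℂ[X], matLog2 A = aeval A p := by
  classical
  set s : Finset ℂ := Finset.image (fun i => (hA.eigenvalues i : ℂ)) Finset.univ with hs
  set f : ℂ → ℂ := fun x => (Real.logb 2 x.re : ℂ) with hf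
  refine ⟨Lagrange.interpolate s id f, ?_⟩
  have hinj : Set.InjOn (id : ℂ → ℂ) s := Function.injective_id.injOn
  have hev : ∀ i, (Lagrange.interpolate s id f).eval ((hA.eigenvalues i : ℂ))
      = (Real.logb 2 (hA.eigenvalues i) : ℂ) := by
    intro i
    have hm : ((hA.eigenvalues i : ℂ)) ∈ s := by simp [hs]
    have := Lagrange.eval_interpolate_at_node (r := f) hinj hm
    simpa [hf] using this
  conv_rhs => rw [hA.spectral_theorem, Unitary.conjStarAlgAut_apply]
  rw [aeval_unitary_conj, aeval_diagonal']
  rw [matLog2, dif_pos hA]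
  have : (fun i => (Real.logb 2 (hA.eigenvalues i) : ℂ))
      = fun i => (Lagrange.interpolate s id f).eval ((RCLike.ofReal ∘ hA.eigenvalues) i) := by
    funext i; exact (hev i).symm
  rw [this]

open Polynomial in
lemma commute_aeval {A B : Matrix d d ℂ} (h : Commute B A) (p : ℂ[X]) :
    Commute B (aeval A p) := by
  induction p using Polynomial.induction_on' with
  | add p q hp hq => simpa [map_add] using hp.add_right hq
  | monomial k a =>
    rw [aeval_monomial]
    exact (Algebra.commute_algebraMap_right a B).mul_right (h.pow_right k)

lemma commute_matLog2 {A B : Matrix d d ℂ} (h : Commute B A) :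
    Commute B (matLog2 A) := by
  by_cases hA : A.IsHermitian
  · obtain ⟨p, hp⟩ := matLog2_eq_aeval hA
    rw [hp]; exact commute_aeval h p
  · rw [matLog2, dif_neg hA]
    simp [Commute, SemiconjBy]

/-- The pinching trace identity: `Tr(ρ log₂ Φ(ρ)) = Tr(Φ(ρ) log₂ Φ(ρ))`. -/
lemma trace_mul_matLog2_pinch {τ : Type*} [Fintype τ] (P : τ → Matrix d d ℂ)
    (hidem : ∀ i, P i * P i = P i) (horth : ∀ i j, i ≠ j → P i * P j = 0)
    (hsum : ∑ i, P i = 1) (ρ : Matrix d d ℂ) :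
    Matrix.trace (ρ * matLog2 (pinch P ρ)) =
      Matrix.trace (pinch P ρ * matLog2 (pinch P ρ)) := by
  set σ := pinch P ρ with hσ
  set L := matLog2 σ with hL
  have hcomm : ∀ i, Commute (P i) σ := by
    intro i
    have h1 : P i * σ = P i * ρ * P i := by
      rw [hσ, pinch, Finset.mul_sum, Finset.sum_eq_single i]
      · rw [← Matrix.mul_assoc, ← Matrix.mul_assoc, hidem i]
      · intro j _ hj
        rw [← Matrix.mul_assoc, ← Matrix.mul_assoc, horth i j (Ne.symm hj)]
        simp
      · intro h; exact absurd (Finset.mem_univ i) h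
    have h2 : σ * P i = P i * ρ * P i := by
      rw [hσ, pinch, Finset.sum_mul, Finset.sum_eq_single i]
      · rw [Matrix.mul_assoc, Matrix.mul_assoc, hidem i, ← Matrix.mul_assoc]
      · intro j _ hj
        rw [Matrix.mul_assoc, horth j i hj]
        simp
      · intro h; exact absurd (Finset.mem_univ i) h
    exact h1.trans h2.symm
  have hLcomm : ∀ i, Commute (P i) L := fun i => commute_matLog2 (hcomm i)
  have e2 : ∀ i, P i * L * P i = P i * L := by
    intro i
    rw [(hLcomm i).eq, Matrix.mul_assoc, hidem i]
  have hterm : ∀ i, Matrix.trace (P i * (ρ * (P i * L))) = Matrix.trace (ρ * (P i * L)) := by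
    intro i
    rw [Matrix.trace_mul_comm]
    congr 1
    calc ρ * (P i * L) * P i = ρ * (P i * L * P i) := by simp only [Matrix.mul_assoc]
      _ = ρ * (P i * L) := by rw [e2 i]
  calc Matrix.trace (ρ * L)
      = Matrix.trace (ρ * (∑ i, P i) * L) := by rw [hsum, Matrix.mul_one]
    _ = ∑ i, Matrix.trace (ρ * (P i * L)) := by
        rw [Finset.mul_sum, Finset.sum_mul, Matrix.trace_sum]
        exact Finset.sum_congr rfl fun i _ => by rw [Matrix.mul_assoc]
    _ = ∑ i, Matrix.trace (P i * (ρ * (P i * L))) :=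
        Finset.sum_congr rfl fun i _ => (hterm i).symm
    _ = Matrix.trace (σ * L) := by
        rw [hσ, pinch, Finset.sum_mul, Matrix.trace_sum]
        exact Finset.sum_congr rfl fun i _ => by simp only [Matrix.mul_assoc]
end AuxLog

section AuxPtr

set_option linter.unusedSectionVars false

lemma ptrB_sum {τ : Type*} (s : Finset τ) (f : τ → Matrix (m × n) (m × n) ℂ) :
    ptrB (∑ i ∈ s, f i) = ∑ i ∈ s, ptrB (f i) := by
  ext a b
  simp only [ptrB, Matrix.of_apply, Matrix.sum_apply]
  rw [Finset.sum_comm]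

lemma ptrA_sum {τ : Type*} (s : Finset τ) (f : τ → Matrix (m × n) (m × n) ℂ) :
    ptrA (∑ i ∈ s, f i) = ∑ i ∈ s, ptrA (f i) := by
  ext a b
  simp only [ptrA, Matrix.of_apply, Matrix.sum_apply]
  rw [Finset.sum_comm]

lemma ptrB_kronA_mul (A : Matrix m m ℂ) (M : Matrix (m × n) (m × n) ℂ) :
    ptrB ((A ⊗ₖ (1 : Matrix n n ℂ)) * M) = A * ptrB M := by
  ext a b
  simp only [ptrB, Matrix.of_apply, Matrix.mul_apply, Fintype.sum_prod_type,
    kroneckerMap_apply, Matrix.one_apply, mul_ite, mul_one, mul_zero, ite_mul, zero_mul,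
    Finset.sum_ite_eq, Finset.sum_ite_eq', Finset.mem_univ, if_true, Finset.mul_sum]
  exact Finset.sum_comm

lemma ptrB_mul_kronA (A : Matrix m m ℂ) (M : Matrix (m × n) (m × n) ℂ) :
    ptrB (M * (A ⊗ₖ (1 : Matrix n n ℂ))) = ptrB M * A := by
  ext a b
  simp only [ptrB, Matrix.of_apply, Matrix.mul_apply, Fintype.sum_prod_type,
    kroneckerMap_apply, Matrix.one_apply, mul_ite, mul_one, mul_zero,
    Finset.sum_ite_eq, Finset.sum_ite_eq', Finset.mem_univ, if_true, Finset.sum_mul]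
  exact Finset.sum_comm

lemma ptrB_kronB_comm (E : Matrix n n ℂ) (M : Matrix (m × n) (m × n) ℂ) :
    ptrB (M * ((1 : Matrix m m ℂ) ⊗ₖ E)) = ptrB (((1 : Matrix m m ℂ) ⊗ₖ E) * M) := by
  ext a b
  simp only [ptrB, Matrix.of_apply, Matrix.mul_apply, Fintype.sum_prod_type,
    kroneckerMap_apply, Matrix.one_apply, ite_mul, one_mul, zero_mul, mul_ite, mul_one,
    mul_zero]
  have hL : ∀ x : n, (∑ x_1 : m, ∑ x_2 : n, if x_1 = b then M (a, x) (x_1, x_2) * E x_2 x else 0)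
      = ∑ x_2 : n, M (a, x) (b, x_2) * E x_2 x := by
    intro x; rw [Finset.sum_comm]; simp
  have hR : ∀ x : n, (∑ x_1 : m, ∑ x_2 : n, if a = x_1 then E x x_2 * M (x_1, x_2) (b, x) else 0)
      = ∑ x_2 : n, E x x_2 * M (a, x_2) (b, x) := by
    intro x; rw [Finset.sum_comm]; simp
  simp_rw [hL, hR]
  rw [Finset.sum_comm]
  exact Finset.sum_congr rfl fun x _ => Finset.sum_congr rfl fun y _ => mul_comm _ _

lemma ptrA_kronB_mul (E : Matrix n n ℂ) (M : Matrix (m × n) (m × n) ℂ) :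
    ptrA (((1 : Matrix m m ℂ) ⊗ₖ E) * M) = E * ptrA M := by
  ext a b
  simp only [ptrA, Matrix.of_apply, Matrix.mul_apply, Fintype.sum_prod_type,
    kroneckerMap_apply, Matrix.one_apply, ite_mul, one_mul, zero_mul, Finset.mul_sum]
  have hL : ∀ x : m, (∑ x_1 : m, ∑ x_2 : n, if x = x_1 then E a x_2 * M (x_1, x_2) (x, b) else 0)
      = ∑ x_2 : n, E a x_2 * M (x, x_2) (x, b) := by
    intro x; rw [Finset.sum_comm]; simp
  simp_rw [hL]
  rw [Finset.sum_comm]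

lemma ptrA_mul_kronB (E : Matrix n n ℂ) (M : Matrix (m × n) (m × n) ℂ) :
    ptrA (M * ((1 : Matrix m m ℂ) ⊗ₖ E)) = ptrA M * E := by
  ext a b
  simp only [ptrA, Matrix.of_apply, Matrix.mul_apply, Fintype.sum_prod_type,
    kroneckerMap_apply, Matrix.one_apply, mul_ite, mul_one, mul_zero, Finset.sum_mul]
  have hL : ∀ x : m, (∑ x_1 : m, ∑ x_2 : n,
        M (x, a) (x_1, x_2) * ((if x_1 = x then 1 else 0) * E x_2 b))
      = ∑ x_2 : n, M (x, a) (x, x_2) * E x_2 b := by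
    intro x; rw [Finset.sum_comm]; simp
  simp_rw [hL]
  rw [Finset.sum_comm]

lemma ptrA_kronA_comm (A : Matrix m m ℂ) (M : Matrix (m × n) (m × n) ℂ) :
    ptrA (M * (A ⊗ₖ (1 : Matrix n n ℂ))) = ptrA ((A ⊗ₖ (1 : Matrix n n ℂ)) * M) := by
  ext a b
  simp only [ptrA, Matrix.of_apply, Matrix.mul_apply, Fintype.sum_prod_type,
    kroneckerMap_apply, Matrix.one_apply, ite_mul, one_mul, zero_mul, mul_ite, mul_one,
    mul_zero, Finset.sum_ite_eq, Finset.sum_ite_eq', Finset.mem_univ, if_true]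
  rw [Finset.sum_comm]
  exact Finset.sum_congr rfl fun x _ => Finset.sum_congr rfl fun y _ => mul_comm _ _

lemma kron_split (A : Matrix m m ℂ) (B : Matrix n n ℂ) :
    A ⊗ₖ B = (A ⊗ₖ (1 : Matrix n n ℂ)) * ((1 : Matrix m m ℂ) ⊗ₖ B) := by
  rw [← Matrix.mul_kronecker_mul, Matrix.mul_one, Matrix.one_mul]

lemma kron_split' (A : Matrix m m ℂ) (B : Matrix n n ℂ) :
    A ⊗ₖ B = ((1 : Matrix m m ℂ) ⊗ₖ B) * (A ⊗ₖ (1 : Matrix n n ℂ)) := by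
  rw [← Matrix.mul_kronecker_mul, Matrix.mul_one, Matrix.one_mul]

lemma kron_sum_right {τ : Type*} (s : Finset τ) (A : Matrix m m ℂ) (E : τ → Matrix n n ℂ) :
    A ⊗ₖ (∑ k ∈ s, E k) = ∑ k ∈ s, A ⊗ₖ E k := by
  ext ⟨a, p⟩ ⟨b, q⟩
  simp [kroneckerMap_apply, Matrix.sum_apply, Finset.mul_sum]

lemma kron_sum_left {τ : Type*} (s : Finset τ) (A : τ → Matrix m m ℂ) (B : Matrix n n ℂ) :
    (∑ k ∈ s, A k) ⊗ₖ B = ∑ k ∈ s, A k ⊗ₖ B := by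
  ext ⟨a, p⟩ ⟨b, q⟩
  simp [kroneckerMap_apply, Matrix.sum_apply, Finset.sum_mul]

lemma ptrB_PhiAB (PA : ι → Matrix m m ℂ) (PB : κ → Matrix n n ℂ)
    (hidem : ∀ k, PB k * PB k = PB k) (hsum : ∑ k, PB k = 1)
    (ρ : Matrix (m × n) (m × n) ℂ) :
    ptrB (PhiAB PA PB ρ) = pinch PA (ptrB ρ) := by
  rw [PhiAB, ptrB_sum, pinch]
  refine Finset.sum_congr rfl fun j _ => ?_
  rw [ptrB_sum]
  have hterm : ∀ k, ptrB ((PA j ⊗ₖ PB k) * ρ * (PA j ⊗ₖ PB k))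
      = PA j * ptrB (((1 : Matrix m m ℂ) ⊗ₖ (PB k * PB k)) * ρ) * PA j := by
    intro k
    have e : (PA j ⊗ₖ PB k) * ρ * (PA j ⊗ₖ PB k)
        = (PA j ⊗ₖ (1 : Matrix n n ℂ)) *
          ((((1 : Matrix m m ℂ) ⊗ₖ PB k) * ρ * ((1 : Matrix m m ℂ) ⊗ₖ PB k)) *
            (PA j ⊗ₖ (1 : Matrix n n ℂ))) := by
      nth_rewrite 2 [kron_split' (PA j) (PB k)]
      nth_rewrite 1 [kron_split (PA j) (PB k)]
      simp only [Matrix.mul_assoc]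
    rw [e, ← Matrix.mul_assoc, ptrB_mul_kronA, ptrB_kronA_mul]
    congr 2
    rw [ptrB_kronB_comm, ← Matrix.mul_assoc, ← Matrix.mul_kronecker_mul, Matrix.one_mul]
  calc ∑ k, ptrB ((PA j ⊗ₖ PB k) * ρ * (PA j ⊗ₖ PB k))
      = ∑ k, PA j * ptrB (((1 : Matrix m m ℂ) ⊗ₖ (PB k * PB k)) * ρ) * PA j :=
        Finset.sum_congr rfl fun k _ => hterm k
    _ = PA j * ptrB ((∑ k, ((1 : Matrix m m ℂ) ⊗ₖ (PB k * PB k))) * ρ) * PA j := by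
        rw [Finset.sum_mul, ptrB_sum, Finset.mul_sum, Finset.sum_mul]
    _ = PA j * ptrB ρ * PA j := by
        have h2 : (∑ k, ((1 : Matrix m m ℂ) ⊗ₖ (PB k * PB k))) = 1 := by
          have h1 : ∀ k, (1 : Matrix m m ℂ) ⊗ₖ (PB k * PB k)
              = (1 : Matrix m m ℂ) ⊗ₖ PB k := fun k => by rw [hidem k]
          simp_rw [h1]
          rw [← kron_sum_right, hsum, Matrix.one_kronecker_one]
        rw [h2, Matrix.one_mul]

lemma ptrA_PhiAB (PA : ι → Matrix m m ℂ) (PB : κ → Matrix n n ℂ)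
    (hidem : ∀ j, PA j * PA j = PA j) (hsum : ∑ j, PA j = 1)
    (ρ : Matrix (m × n) (m × n) ℂ) :
    ptrA (PhiAB PA PB ρ) = pinch PB (ptrA ρ) := by
  rw [PhiAB, ptrA_sum]
  simp_rw [ptrA_sum]
  rw [Finset.sum_comm, pinch]
  refine Finset.sum_congr rfl fun k _ => ?_
  have hterm : ∀ j, ptrA ((PA j ⊗ₖ PB k) * ρ * (PA j ⊗ₖ PB k))
      = PB k * ptrA (((PA j * PA j) ⊗ₖ (1 : Matrix n n ℂ)) * ρ) * PB k := by
    intro j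
    have e : (PA j ⊗ₖ PB k) * ρ * (PA j ⊗ₖ PB k)
        = ((1 : Matrix m m ℂ) ⊗ₖ PB k) *
          (((PA j ⊗ₖ (1 : Matrix n n ℂ)) * ρ * (PA j ⊗ₖ (1 : Matrix n n ℂ))) *
            ((1 : Matrix m m ℂ) ⊗ₖ PB k)) := by
      nth_rewrite 2 [kron_split (PA j) (PB k)]
      nth_rewrite 1 [kron_split' (PA j) (PB k)]
      simp only [Matrix.mul_assoc]
    rw [e, ← Matrix.mul_assoc, ptrA_mul_kronB, ptrA_kronB_mul]
    congr 2
    rw [ptrA_kronA_comm, ← Matrix.mul_assoc, ← Matrix.mul_kronecker_mul, Matrix.one_mul]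
  calc ∑ j, ptrA ((PA j ⊗ₖ PB k) * ρ * (PA j ⊗ₖ PB k))
      = ∑ j, PB k * ptrA (((PA j * PA j) ⊗ₖ (1 : Matrix n n ℂ)) * ρ) * PB k :=
        Finset.sum_congr rfl fun j _ => hterm j
    _ = PB k * ptrA ((∑ j, ((PA j * PA j) ⊗ₖ (1 : Matrix n n ℂ))) * ρ) * PB k := by
        rw [Finset.sum_mul, ptrA_sum, Finset.mul_sum, Finset.sum_mul]
    _ = PB k * ptrA ρ * PB k := by
        have h2 : (∑ j, ((PA j * PA j) ⊗ₖ (1 : Matrix n n ℂ))) = 1 := by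
          have h1 : ∀ j, (PA j * PA j) ⊗ₖ (1 : Matrix n n ℂ)
              = PA j ⊗ₖ (1 : Matrix n n ℂ) := fun j => by rw [hidem j]
          simp_rw [h1]
          rw [← kron_sum_left, hsum, Matrix.one_kronecker_one]
        rw [h2, Matrix.one_mul]

end AuxPtr

set_option linter.unusedSectionVars false in
lemma PhiAB_eq_pinch (PA : ι → Matrix m m ℂ) (PB : κ → Matrix n n ℂ)
    (ρ : Matrix (m × n) (m × n) ℂ) :
    PhiAB PA PB ρ = pinch (fun jk : ι × κ => PA jk.1 ⊗ₖ PB jk.2) ρ := by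
  rw [PhiAB, pinch, Fintype.sum_prod_type]

/-- `I(ρ_AB) - I(Φ_AB(ρ_AB)) = S(ρ_AB‖Φ_AB(ρ_AB)) - S(ρ_A‖Φ_A(ρ_A)) - S(ρ_B‖Φ_B(ρ_B))`. -/
theorem stmt5 (ρ : Matrix (m × n) (m × n) ℂ) (hρ : IsDensity ρ)
    (PA : ι → Matrix m m ℂ) (PB : κ → Matrix n n ℂ)
    (hPA : MeasFam PA) (hPB : MeasFam PB) :
    mutInfo ρ - mutInfo (PhiAB PA PB ρ) =
      relEnt ρ (PhiAB PA PB ρ) - relEnt (ptrB ρ) (pinch PA (ptrB ρ)) -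
        relEnt (ptrA ρ) (pinch PB (ptrA ρ)) := by
  obtain ⟨hAh, hAi, hAo, hAs, -⟩ := hPA
  obtain ⟨hBh, hBi, hBo, hBs, -⟩ := hPB
  -- the product family is a pinching family
  have hPi : ∀ jk : ι × κ, (PA jk.1 ⊗ₖ PB jk.2) * (PA jk.1 ⊗ₖ PB jk.2)
      = PA jk.1 ⊗ₖ PB jk.2 := by
    intro jk
    rw [← Matrix.mul_kronecker_mul, hAi, hBi]
  have hPo : ∀ jk jk' : ι × κ, jk ≠ jk' →
      (PA jk.1 ⊗ₖ PB jk.2) * (PA jk'.1 ⊗ₖ PB jk'.2) = 0 := by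
    intro jk jk' hne
    rw [← Matrix.mul_kronecker_mul]
    rcases eq_or_ne jk.1 jk'.1 with h1 | h1
    · have h2 : jk.2 ≠ jk'.2 := fun h2 => hne (Prod.ext h1 h2)
      rw [hBo _ _ h2, Matrix.kronecker_zero]
    · rw [hAo _ _ h1, Matrix.zero_kronecker]
  have hPs : (∑ jk : ι × κ, PA jk.1 ⊗ₖ PB jk.2) = 1 := by
    rw [Fintype.sum_prod_type]
    calc (∑ j, ∑ k, PA j ⊗ₖ PB k)
        = ∑ j, PA j ⊗ₖ (∑ k, PB k) :=
          Finset.sum_congr rfl fun j _ => (kron_sum_right _ _ _).symm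
      _ = (∑ j, PA j) ⊗ₖ (∑ k, PB k) := (kron_sum_left _ _ _).symm
      _ = 1 := by rw [hAs, hBs, Matrix.one_kronecker_one]
  have h1 : Matrix.trace (ρ * matLog2 (PhiAB PA PB ρ))
      = Matrix.trace (PhiAB PA PB ρ * matLog2 (PhiAB PA PB ρ)) := by
    rw [PhiAB_eq_pinch]
    exact trace_mul_matLog2_pinch _ hPi hPo hPs ρ
  have h2 : Matrix.trace (ptrB ρ * matLog2 (pinch PA (ptrB ρ)))
      = Matrix.trace (pinch PA (ptrB ρ) * matLog2 (pinch PA (ptrB ρ))) :=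
    trace_mul_matLog2_pinch _ hAi hAo hAs _
  have h3 : Matrix.trace (ptrA ρ * matLog2 (pinch PB (ptrA ρ)))
      = Matrix.trace (pinch PB (ptrA ρ) * matLog2 (pinch PB (ptrA ρ))) :=
    trace_mul_matLog2_pinch _ hBi hBo hBs _
  have hpb : ptrB (PhiAB PA PB ρ) = pinch PA (ptrB ρ) :=
    ptrB_PhiAB PA PB hBi hBs ρ
  have hpa : ptrA (PhiAB PA PB ρ) = pinch PB (ptrA ρ) :=
    ptrA_PhiAB PA PB hAi hAs ρ
  simp only [mutInfo, vN, relEnt, hpb, hpa, h1, h2, h3]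
  ring
end

section
/- The non-negativity of global quantum discord is equivalent to the inequality Σ_{j=1}^N S(ρ_{A_j}) − S(ρ) ≥ Σ_{j=1}^N S(Φ_j(ρ_{A_j})) − S(Φ(ρ)): a non-selective product projective measurement cannot increase the total (multipartite mutual-information) correlation Σ_j S(ρ_{A_j}) − S(ρ). -/
open scoped Kronecker
open Matrix
open scoped ComplexOrder

variable {N : ℕ} {d : Fin N → Type*} [∀ i, Fintype (d i)] [∀ i, DecidableEq (d i)]

/-- Extend a configuration on the sites `≠ j` by the value `a` at site `j`. -/
noncomputable def extendAt (j : Fin N) (a : d j)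
    (f : ∀ i : {i : Fin N // i ≠ j}, d i.1) : ∀ i, d i :=
  fun i => if h : i = j then cast (congrArg d h).symm a else f ⟨i, h⟩

/-- The reduced density operator of the `j`-th subsystem (partial trace over all
other factors). -/
noncomputable def redAt (j : Fin N) (ρ : Matrix (∀ i, d i) (∀ i, d i) ℂ) :
    Matrix (d j) (d j) ℂ :=
  Matrix.of fun a b => ∑ f : ∀ i : {i : Fin N // i ≠ j}, d i.1,
    ρ (extendAt j a f) (extendAt j b f)

/-- The product projector `Π_k = Π_{A_1}^{k_1} ⊗ ⋯ ⊗ Π_{A_N}^{k_N}`. -/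
noncomputable def bigProj (P : ∀ i, d i → Matrix (d i) (d i) ℂ) (k : ∀ i, d i) :
    Matrix (∀ i, d i) (∀ i, d i) ℂ :=
  Matrix.of fun a b => ∏ i, P i (k i) (a i) (b i)

/-- The global product measurement channel `Φ = Φ_1 ⊗ ⋯ ⊗ Φ_N`. -/
noncomputable def bigPinch (P : ∀ i, d i → Matrix (d i) (d i) ℂ)
    (ρ : Matrix (∀ i, d i) (∀ i, d i) ℂ) : Matrix (∀ i, d i) (∀ i, d i) ℂ :=
  ∑ k : ∀ i, d i, bigProj P k * ρ * bigProj P k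

section Aux

open Polynomial

variable {M : Type*} {n : Type*} [Fintype n] [DecidableEq n]

theorem commute_aeval_s8 [Ring M] [Algebra ℂ M] (X σ : M) (h : Commute X σ)
    (q : ℂ[X]) : Commute X (Polynomial.aeval σ q) := by
  induction q using Polynomial.induction_on' with
  | add p q hp hq => rw [map_add]; exact hp.add_right hq
  | monomial n a =>
    rw [Polynomial.aeval_monomial]
    exact (Algebra.commute_algebraMap_left a X).symm.mul_right (h.pow_right n)

/-- Conjugation by a unitary as an algebra homomorphism. -/
noncomputable def conjAlgHom (u : Matrix n n ℂ) (h1 : u * star u = 1) (h2 : star u * u = 1) :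
    Matrix n n ℂ →ₐ[ℂ] Matrix n n ℂ where
  toFun x := u * x * star u
  map_one' := show u * 1 * star u = 1 by rw [mul_one, h1]
  map_mul' x y :=
    show u * (x * y) * star u = (u * x * star u) * (u * y * star u) by
      have e : (u * x * star u) * (u * y * star u) = u * x * (star u * u) * (y * star u) := by
        noncomm_ring
      rw [e, h2, mul_one]
      noncomm_ring
  map_zero' := show u * 0 * star u = 0 by simp
  map_add' x y := show u * (x + y) * star u = u * x * star u + u * y * star u by noncomm_ring
  commutes' c :=
    show u * algebraMap ℂ (Matrix n n ℂ) c * star u = algebraMap ℂ (Matrix n n ℂ) c by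
      rw [Algebra.algebraMap_eq_smul_one, Matrix.mul_smul, mul_one, Matrix.smul_mul, h1]

/-- `matLog2` of a Hermitian matrix is a polynomial in that matrix. -/
theorem matLog2_eq_aeval_s8 (σ : Matrix n n ℂ) (hA : σ.IsHermitian) :
    ∃ q : ℂ[X], matLog2 σ = Polynomial.aeval σ q := by
  classical
  set s : Finset ℝ := Finset.image hA.eigenvalues Finset.univ with hs
  set p : ℝ[X] := Lagrange.interpolate s id (Real.logb 2) with hp
  refine ⟨p.map (algebraMap ℝ ℂ), ?_⟩
  have hinj : Set.InjOn (id : ℝ → ℝ) s := Function.injective_id.injOn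
  set u : Matrix n n ℂ := (hA.eigenvectorUnitary : Matrix n n ℂ) with hu
  have h1 : u * star u = 1 := Matrix.mem_unitaryGroup_iff.mp hA.eigenvectorUnitary.2
  have h2 : star u * u = 1 := Matrix.mem_unitaryGroup_iff'.mp hA.eigenvectorUnitary.2
  have hσ : σ = conjAlgHom u h1 h2 (Matrix.diagonal (RCLike.ofReal ∘ hA.eigenvalues)) :=
    hA.spectral_theorem
  conv_rhs => rw [hσ, Polynomial.aeval_algHom_apply]
  have hdiag : Polynomial.aeval (Matrix.diagonal (RCLike.ofReal ∘ hA.eigenvalues))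
      (p.map (algebraMap ℝ ℂ)) =
      Matrix.diagonal fun i => (Real.logb 2 (hA.eigenvalues i) : ℂ) := by
    have h4 := Polynomial.aeval_algHom_apply (Matrix.diagonalAlgHom (n := n) (α := ℂ) ℂ)
      ((RCLike.ofReal ∘ hA.eigenvalues : n → ℂ)) (p.map (algebraMap ℝ ℂ))
    simp only [Matrix.diagonalAlgHom_apply] at h4
    rw [h4]
    refine congrArg Matrix.diagonal (funext fun i => ?_)
    have h3 : ((RCLike.ofReal ∘ hA.eigenvalues : n → ℂ)) i = (hA.eigenvalues i : ℂ) := rfl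
    have h5 : p.eval (hA.eigenvalues i) = Real.logb 2 (hA.eigenvalues i) := by
      have hmem : hA.eigenvalues i ∈ s := Finset.mem_image_of_mem _ (Finset.mem_univ i)
      rw [hp]; exact Lagrange.eval_interpolate_at_node (r := Real.logb 2) hinj hmem
    rw [Polynomial.aeval_fn_apply, h3, Polynomial.aeval_map_algebraMap,
      ← Complex.coe_algebraMap, Polynomial.aeval_algebraMap_apply_eq_algebraMap_eval, h5]
  rw [hdiag, matLog2, dif_pos hA]
  rfl

/-- Anything commuting with `σ` commutes with `matLog2 σ`. -/
theorem commute_matLog2_s8 (σ X : Matrix n n ℂ) (h : X * σ = σ * X) :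
    X * matLog2 σ = matLog2 σ * X := by
  by_cases hA : σ.IsHermitian
  · obtain ⟨q, hq⟩ := matLog2_eq_aeval_s8 σ hA
    rw [hq]
    exact commute_aeval_s8 X σ h q
  · rw [matLog2, dif_neg hA, Matrix.mul_zero, Matrix.zero_mul]

variable {ι : Type*} [Fintype ι]

/-- The pinched state commutes with each projector. -/
theorem pinch_comm (Q : ι → Matrix n n ℂ) (hmul : ∀ i, Q i * Q i = Q i)
    (horth : ∀ i j, i ≠ j → Q i * Q j = 0) (ρ : Matrix n n ℂ) (k : ι) :
    Q k * pinch Q ρ = pinch Q ρ * Q k := by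
  unfold pinch
  rw [Finset.mul_sum, Finset.sum_mul]
  refine Finset.sum_congr rfl fun i _ => ?_
  by_cases h : i = k
  · subst h
    calc Q i * (Q i * ρ * Q i) = (Q i * Q i) * ρ * Q i := by noncomm_ring
      _ = Q i * ρ * Q i := by rw [hmul]
      _ = Q i * ρ * (Q i * Q i) := by rw [hmul]
      _ = Q i * ρ * Q i * Q i := by noncomm_ring
  · calc Q k * (Q i * ρ * Q i) = (Q k * Q i) * ρ * Q i := by noncomm_ring
      _ = 0 := by rw [horth k i (Ne.symm h)]; simp
      _ = Q i * ρ * (Q i * Q k) := by rw [horth i k h]; simp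
      _ = Q i * ρ * Q i * Q k := by noncomm_ring

theorem trace_pinch_inv (Q : ι → Matrix n n ℂ) (hmul : ∀ i, Q i * Q i = Q i)
    (hsum : ∑ i, Q i = 1) (ρ L : Matrix n n ℂ) (hcomm : ∀ k, Q k * L = L * Q k) :
    Matrix.trace (pinch Q ρ * L) = Matrix.trace (ρ * L) := by
  unfold pinch
  rw [Finset.sum_mul, Matrix.trace_sum]
  have step2 : ∀ i, Matrix.trace (Q i * ρ * Q i * L) = Matrix.trace (ρ * (Q i * L)) := by
    intro i
    have e2 : Q i * L * Q i = Q i * L := by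
      calc Q i * L * Q i = Q i * (L * Q i) := by rw [Matrix.mul_assoc]
        _ = Q i * (Q i * L) := by rw [← hcomm]
        _ = Q i * Q i * L := by rw [Matrix.mul_assoc]
        _ = Q i * L := by rw [hmul]
    calc Matrix.trace (Q i * ρ * Q i * L)
        = Matrix.trace (Q i * ρ * (Q i * L)) := by rw [Matrix.mul_assoc]
      _ = Matrix.trace (Q i * L * Q i * ρ) := by rw [Matrix.trace_mul_cycle]
      _ = Matrix.trace (Q i * L * ρ) := by rw [e2]
      _ = Matrix.trace (ρ * (Q i * L)) := by rw [Matrix.trace_mul_comm]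
  simp_rw [step2]
  rw [← Matrix.trace_sum, ← Finset.mul_sum, ← Finset.sum_mul, hsum, Matrix.one_mul]

theorem relEnt_pinch' (Q : ι → Matrix n n ℂ) (hmul : ∀ i, Q i * Q i = Q i)
    (horth : ∀ i j, i ≠ j → Q i * Q j = 0) (hsum : ∑ i, Q i = 1)
    (ρ : Matrix n n ℂ) :
    relEnt ρ (pinch Q ρ) = vN (pinch Q ρ) - vN ρ := by
  have key := trace_pinch_inv Q hmul hsum ρ (matLog2 (pinch Q ρ))
    (fun k => commute_matLog2_s8 _ _ (pinch_comm Q hmul horth ρ k))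
  rw [relEnt, vN, vN, ← key]
  ring

end Aux

theorem bigProj_mul (P : ∀ i, d i → Matrix (d i) (d i) ℂ) (k l : ∀ i, d i) :
    bigProj P k * bigProj P l =
      Matrix.of fun a b => ∏ i, (P i (k i) * P i (l i)) (a i) (b i) := by
  ext a b
  simp only [Matrix.mul_apply, bigProj, Matrix.of_apply]
  simp_rw [← Finset.prod_mul_distrib]
  rw [Fintype.prod_sum]

theorem bigProj_idem (P : ∀ i, d i → Matrix (d i) (d i) ℂ) (hP : ∀ i, MeasFam (P i))
    (k : ∀ i, d i) : bigProj P k * bigProj P k = bigProj P k := by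
  rw [bigProj_mul]
  ext a b
  simp only [Matrix.of_apply, bigProj]
  exact Finset.prod_congr rfl fun i _ => by rw [(hP i).2.1]

theorem bigProj_orth (P : ∀ i, d i → Matrix (d i) (d i) ℂ) (hP : ∀ i, MeasFam (P i))
    (k l : ∀ i, d i) (hkl : k ≠ l) : bigProj P k * bigProj P l = 0 := by
  rw [bigProj_mul]
  ext a b
  simp only [Matrix.of_apply, Matrix.zero_apply]
  obtain ⟨i0, hi0⟩ := Function.ne_iff.mp hkl
  refine Finset.prod_eq_zero (Finset.mem_univ i0) ?_
  rw [(hP i0).2.2.1 _ _ hi0]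
  rfl

theorem bigProj_sum (P : ∀ i, d i → Matrix (d i) (d i) ℂ) (hP : ∀ i, MeasFam (P i)) :
    ∑ k : ∀ i, d i, bigProj P k = 1 := by
  ext a b
  simp only [Matrix.sum_apply, bigProj, Matrix.of_apply]
  rw [← Fintype.prod_sum (f := fun i x => P i x (a i) (b i))]
  have h : ∀ i, ∑ x : d i, P i x (a i) (b i) = if a i = b i then 1 else 0 := by
    intro i
    calc ∑ x : d i, P i x (a i) (b i) = (∑ x : d i, P i x) (a i) (b i) := by
          simp [Matrix.sum_apply]
      _ = (1 : Matrix (d i) (d i) ℂ) (a i) (b i) := by rw [(hP i).2.2.2.1]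
      _ = if a i = b i then 1 else 0 := Matrix.one_apply
  simp_rw [h]
  rw [Matrix.one_apply]
  by_cases hab : a = b
  · subst hab; simp
  · obtain ⟨i0, hi0⟩ := Function.ne_iff.mp hab
    rw [if_neg hab]
    exact Finset.prod_eq_zero (Finset.mem_univ i0) (if_neg hi0)

/-- non-negativity of global quantum discord is equivalent to the
statement that a non-selective product projective measurement cannot increase the
total multipartite mutual-information correlation. -/
theorem stmt8 (ρ : Matrix (∀ i, d i) (∀ i, d i) ℂ) (hρ : IsDensity ρ)
    (P : ∀ i, d i → Matrix (d i) (d i) ℂ) (hP : ∀ i, MeasFam (P i)) :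
    (0 ≤ relEnt ρ (bigPinch P ρ) -
        ∑ j, relEnt (redAt j ρ) (pinch (P j) (redAt j ρ))) ↔
      (∑ j, vN (pinch (P j) (redAt j ρ))) - vN (bigPinch P ρ) ≤
        (∑ j, vN (redAt j ρ)) - vN ρ := by
  have hbig : bigPinch P ρ = pinch (bigProj P) ρ := rfl
  have hG : relEnt ρ (bigPinch P ρ) = vN (bigPinch P ρ) - vN ρ := by
    rw [hbig]
    exact relEnt_pinch' (bigProj P) (bigProj_idem P hP) (bigProj_orth P hP)
      (bigProj_sum P hP) ρ
  have hL : ∀ j, relEnt (redAt j ρ) (pinch (P j) (redAt j ρ)) =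
      vN (pinch (P j) (redAt j ρ)) - vN (redAt j ρ) := fun j =>
    relEnt_pinch' (P j) (hP j).2.1 (hP j).2.2.1 (hP j).2.2.2.1 (redAt j ρ)
  rw [hG]
  simp_rw [hL, Finset.sum_sub_distrib]
  constructor <;> intro h <;> linarith
end

section
/- The global quantum discord of the three-qubit GHZ state equals 1: the minimum over all local product projective measurement bases of S(Φ(ρ)) is 1, attained by measuring each qubit in the σ^z eigenbasis. -/
open scoped Kronecker
open Matrix
open scoped ComplexOrder

/-- The three-qubit GHZ vector `(|↑↑↑⟩ + |↓↓↓⟩)/√2`. -/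
noncomputable def ghz : Fin 2 × Fin 2 × Fin 2 → ℂ := fun s =>
  if s = (0, 0, 0) ∨ s = (1, 1, 1) then ((Real.sqrt 2)⁻¹ : ℝ) else 0

/-- The GHZ density operator `|GHZ⟩⟨GHZ|`. -/
noncomputable def ghzState : Matrix (Fin 2 × Fin 2 × Fin 2) (Fin 2 × Fin 2 × Fin 2) ℂ :=
  Matrix.vecMulVec ghz (star ghz)

/-- The three-qubit product measurement channel built from local rank-one
measurements `Q1, Q2, Q3`. -/
noncomputable def phi3 (Q1 Q2 Q3 : Fin 2 → Matrix (Fin 2) (Fin 2) ℂ)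
    (ρ : Matrix (Fin 2 × Fin 2 × Fin 2) (Fin 2 × Fin 2 × Fin 2) ℂ) :
    Matrix (Fin 2 × Fin 2 × Fin 2) (Fin 2 × Fin 2 × Fin 2) ℂ :=
  ∑ s : Fin 2 × Fin 2 × Fin 2,
    (Q1 s.1 ⊗ₖ (Q2 s.2.1 ⊗ₖ Q3 s.2.2)) * ρ * (Q1 s.1 ⊗ₖ (Q2 s.2.1 ⊗ₖ Q3 s.2.2))


/-! ### Auxiliary machinery -/

open Polynomial in
lemma aux_charpoly_unitary_conj {n : Type*} [Fintype n] [DecidableEq n]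
    (V : Matrix n n ℂ) (hV : V ∈ Matrix.unitaryGroup n ℂ)
    (B : Matrix n n ℂ) : (V * B * star V).charpoly = B.charpoly := by
  have hVV : V * star V = 1 := (Matrix.mem_unitaryGroup_iff).mp hV
  have hVV' : star V * V = 1 := (Matrix.mem_unitaryGroup_iff').mp hV
  unfold Matrix.charpoly
  have hmap : charmatrix (V * B * star V)
      = (V.map C) * charmatrix B * ((star V).map C) := by
    unfold charmatrix
    have h1 : (C : ℂ →+* ℂ[X]).mapMatrix (V * B * star V)
        = V.map C * (C.mapMatrix B) * (star V).map C := by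
      simp [RingHom.mapMatrix_apply, Matrix.map_mul]
    have hc := (Matrix.scalar_commute (X : ℂ[X]) (fun r => (Commute.all _ _)) (V.map C)).eq
    have h2 : V.map C * (Matrix.scalar n (X : ℂ[X])) * ((star V).map C)
        = Matrix.scalar n (X : ℂ[X]) := by
      rw [← hc, mul_assoc, ← Matrix.map_mul, hVV]
      simp
    rw [h1]
    conv_lhs => rw [← h2]
    rw [Matrix.mul_sub, Matrix.sub_mul]
  rw [hmap, Matrix.det_mul, Matrix.det_mul, mul_comm, ← mul_assoc, ← Matrix.det_mul,
    ← Matrix.map_mul, hVV']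
  simp

open Polynomial in
lemma aux_charpoly_diagonal {n : Type*} [Fintype n] [DecidableEq n] (d : n → ℂ) :
    (Matrix.diagonal d).charpoly = ∏ i, (X - C (d i)) := by
  unfold Matrix.charpoly charmatrix
  have : (Matrix.scalar n (X : ℂ[X])) - (C : ℂ →+* ℂ[X]).mapMatrix (Matrix.diagonal d)
      = Matrix.diagonal (fun i => X - C (d i)) := by
    ext i j
    by_cases h : i = j <;>
      simp [h, Matrix.diagonal_apply, Matrix.scalar_apply, RingHom.mapMatrix_apply]
  rw [this, Matrix.det_diagonal]

lemma aux_trace_matLog2 {n : Type*} [Fintype n] [DecidableEq n]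
    (A : Matrix n n ℂ) (hA : A.IsHermitian) :
    Matrix.trace (A * matLog2 A)
      = ∑ i, ((hA.eigenvalues i : ℂ) * (Real.logb 2 (hA.eigenvalues i) : ℂ)) := by
  set U : Matrix n n ℂ := (hA.eigenvectorUnitary : Matrix n n ℂ) with hU
  have hUU : star U * U = 1 := (Matrix.mem_unitaryGroup_iff').mp hA.eigenvectorUnitary.2
  set D1 : Matrix n n ℂ := Matrix.diagonal (RCLike.ofReal ∘ hA.eigenvalues) with hD1
  set D2 : Matrix n n ℂ := Matrix.diagonal (fun i => (Real.logb 2 (hA.eigenvalues i) : ℂ)) with hD2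
  have hlog : matLog2 A = U * D2 * star U := by
    rw [matLog2, dif_pos hA]
  have hspec : A = U * D1 * star U := hA.spectral_theorem
  have hmul : A * matLog2 A = U * (D1 * D2) * star U := by
    rw [hlog]
    conv_lhs => rw [hspec]
    have h3 : star U * (U * D2 * star U) = D2 * star U := by
      rw [← mul_assoc, ← mul_assoc, hUU, one_mul]
    rw [mul_assoc (U * D1) (star U) (U * D2 * star U), h3]
    noncomm_ring
  rw [hmul, Matrix.trace_mul_cycle, ← mul_assoc, hUU, one_mul, hD1, hD2,
    Matrix.diagonal_mul_diagonal, Matrix.trace_diagonal]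
  rfl

open Polynomial in
lemma aux_eigs_multiset {n : Type*} [Fintype n] [DecidableEq n]
    (A : Matrix n n ℂ) (hA : A.IsHermitian)
    (V : Matrix n n ℂ) (hV : V ∈ Matrix.unitaryGroup n ℂ) (p : n → ℝ)
    (hVA : A = V * Matrix.diagonal (fun i => (p i : ℂ)) * star V) :
    (Finset.univ.val.map (fun i => ((hA.eigenvalues i : ℝ) : ℂ)))
      = Finset.univ.val.map (fun i => ((p i : ℝ) : ℂ)) := by
  have c1 : A.charpoly = ∏ i, (X - C ((hA.eigenvalues i : ℝ) : ℂ)) := by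
    conv_lhs => rw [hA.spectral_theorem]
    rw [Unitary.conjStarAlgAut_apply, aux_charpoly_unitary_conj _ hA.eigenvectorUnitary.2, aux_charpoly_diagonal]
    rfl
  have c2 : A.charpoly = ∏ i, (X - C ((p i : ℝ) : ℂ)) := by
    conv_lhs => rw [hVA]
    rw [aux_charpoly_unitary_conj _ hV, aux_charpoly_diagonal]
  have key : (∏ i, (X - C ((hA.eigenvalues i : ℝ) : ℂ))) = ∏ i, (X - C ((p i : ℝ) : ℂ)) := by
    rw [← c1, c2]
  have r1' : (Multiset.map (fun i => X - C ((hA.eigenvalues i : ℝ) : ℂ)) Finset.univ.val).prod.roots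
      = Multiset.map (fun i => ((hA.eigenvalues i : ℝ) : ℂ)) Finset.univ.val := by
    simpa [Multiset.map_map, Function.comp] using Polynomial.roots_multiset_prod_X_sub_C
      (Finset.univ.val.map (fun i => ((hA.eigenvalues i : ℝ) : ℂ)))
  have r2' : (Multiset.map (fun i => X - C ((p i : ℝ) : ℂ)) Finset.univ.val).prod.roots
      = Multiset.map (fun i => ((p i : ℝ) : ℂ)) Finset.univ.val := by
    simpa [Multiset.map_map, Function.comp] using Polynomial.roots_multiset_prod_X_sub_C
      (Finset.univ.val.map (fun i => ((p i : ℝ) : ℂ)))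
  have e1 : (∏ i, (X - C ((hA.eigenvalues i : ℝ) : ℂ)))
      = (Multiset.map (fun i => X - C ((hA.eigenvalues i : ℝ) : ℂ)) Finset.univ.val).prod := rfl
  have e2 : (∏ i, (X - C ((p i : ℝ) : ℂ)))
      = (Multiset.map (fun i => X - C ((p i : ℝ) : ℂ)) Finset.univ.val).prod := rfl
  rw [← r1', ← r2', ← e1, ← e2, key]

lemma aux_vN_conj_diag {n : Type*} [Fintype n] [DecidableEq n]
    (V : Matrix n n ℂ) (hV : V ∈ Matrix.unitaryGroup n ℂ) (p : n → ℝ)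
    (A : Matrix n n ℂ) (hVA : A = V * Matrix.diagonal (fun i => (p i : ℂ)) * star V) :
    vN A = -∑ i, p i * Real.logb 2 (p i) := by
  have hA : A.IsHermitian := by
    rw [hVA]
    exact Matrix.isHermitian_mul_mul_conjTranspose V
      (Matrix.isHermitian_diagonal_iff.mpr (fun i => Complex.conj_ofReal _))
  have h1 := aux_trace_matLog2 A hA
  have h2 := aux_eigs_multiset A hA V hV p hVA
  have hsum : (∑ i, (hA.eigenvalues i) * Real.logb 2 (hA.eigenvalues i))
      = ∑ i, p i * Real.logb 2 (p i) := by
    have h3 := congrArg (fun m : Multiset ℂ => (m.map (fun z => z.re * Real.logb 2 z.re)).sum) h2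
    simp only [Multiset.map_map, Function.comp, Complex.ofReal_re] at h3
    exact h3
  rw [vN, h1, Complex.re_sum]
  simp only [← Complex.ofReal_mul, Complex.ofReal_re]
  rw [hsum]

lemma aux_vmv_mul {n : Type*} [Fintype n] (a b c d : n → ℂ) :
    Matrix.vecMulVec a (star b) * Matrix.vecMulVec c (star d)
      = (star b ⬝ᵥ c) • Matrix.vecMulVec a (star d) := by
  ext i j
  simp only [Matrix.mul_apply, Matrix.vecMulVec_apply, Matrix.smul_apply, dotProduct,
    Pi.star_apply, smul_eq_mul, Finset.sum_mul]
  exact Finset.sum_congr rfl fun k _ => by ring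

lemma aux_kron_vmv {m n : Type*} [Fintype m] [Fintype n] (a : m → ℂ) (c : n → ℂ) :
    (Matrix.vecMulVec a (star a)) ⊗ₖ (Matrix.vecMulVec c (star c))
      = Matrix.vecMulVec (fun p : m × n => a p.1 * c p.2)
          (star fun p : m × n => a p.1 * c p.2) := by
  ext ⟨i, j⟩ ⟨k, l⟩
  simp only [Matrix.kroneckerMap_apply, Matrix.vecMulVec_apply, Pi.star_apply, star_mul']
  ring

lemma aux_vecMulVec_fin2 (x y : ℂ) :
    Matrix.vecMulVec ![x, y] (star ![x, y])
      = !![x * star x, x * star y; y * star x, y * star y] := by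
  ext i j
  fin_cases i <;> fin_cases j <;> simp [Matrix.vecMulVec_apply]

lemma aux_rankone (Q : Matrix (Fin 2) (Fin 2) ℂ) (hH : Q.IsHermitian) (hI : Q * Q = Q)
    (hT : Q.trace = 1) :
    ∃ v : Fin 2 → ℂ, Q = Matrix.vecMulVec v (star v) ∧ star v ⬝ᵥ v = 1 := by
  have hba : star (Q 0 0) = Q 0 0 := hH.apply 0 0
  have hc : star (Q 0 1) = Q 1 0 := hH.apply 1 0
  set r : ℝ := (Q 0 0).re with hr
  have ha : Q 0 0 = (r : ℝ) := by
    rw [Complex.ext_iff]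
    refine ⟨by simp [hr], ?_⟩
    have := congrArg Complex.im hba
    simp only [RingHom.coe_coe, Complex.star_def, Complex.conj_im] at this
    simp only [Complex.ofReal_im]
    linarith
  have htr : Q 1 1 = ((1 - r : ℝ) : ℂ) := by
    rw [Matrix.trace_fin_two] at hT
    push_cast
    rw [← ha]
    linear_combination hT
  have hQQ00 : Q 0 0 * Q 0 0 + Q 0 1 * Q 1 0 = Q 0 0 := by
    have := congrFun (congrFun hI 0) 0
    simpa [Matrix.mul_apply, Fin.sum_univ_two] using this
  have hnsq' : Complex.normSq (Q 0 1) = r - r^2 := by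
    have hnsq : (Complex.normSq (Q 0 1) : ℂ) = ((r - r^2 : ℝ) : ℂ) := by
      rw [← Complex.mul_conj]
      push_cast
      rw [← ha]
      have h5 : Q 0 1 * (starRingEnd ℂ) (Q 0 1) = Q 0 1 * Q 1 0 := by
        rw [← hc]; rfl
      rw [h5]
      linear_combination hQQ00
    exact_mod_cast hnsq
  have hnsqc : Complex.normSq (Q 1 0) = r - r^2 := by
    rw [← hc]; simpa using hnsq'
  have hr0 : 0 ≤ r ∧ r ≤ 1 := by
    have h1 : 0 ≤ Complex.normSq (Q 0 1) := Complex.normSq_nonneg _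
    constructor <;> nlinarith
  by_cases hz : r = 0
  · refine ⟨![0, 1], ?_, by simp [dotProduct, Fin.sum_univ_two]⟩
    have hb0 : Q 0 1 = 0 := by
      rw [← Complex.normSq_eq_zero, hnsq', hz]; ring
    have hc0 : Q 1 0 = 0 := by rw [← hc, hb0]; simp
    rw [Matrix.eta_fin_two Q, aux_vecMulVec_fin2, ha, htr, hz, hb0, hc0]
    norm_num
  · have hrpos : 0 < r := lt_of_le_of_ne hr0.1 (Ne.symm hz)
    set s : ℝ := Real.sqrt r with hs
    have hs2 : (s : ℝ) * s = r := Real.mul_self_sqrt hr0.1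
    have hrne : ((r : ℝ) : ℂ) ≠ 0 := by exact_mod_cast hz
    have hsne : (s : ℂ) ≠ 0 := by
      simp only [ne_eq, Complex.ofReal_eq_zero]
      positivity
    have hss : ((s : ℂ) * (s : ℂ)) = ((r : ℝ) : ℂ) := by
      rw [← Complex.ofReal_mul, hs2]
    refine ⟨![(s : ℂ), Q 1 0 / (s : ℂ)], ?_, ?_⟩
    · rw [Matrix.eta_fin_two Q, aux_vecMulVec_fin2]
      ext i j
      fin_cases i <;> fin_cases j <;> simp
      · rw [ha]; exact hss.symm
      · have hc' : (starRingEnd ℂ) (Q 0 1) = Q 1 0 := hc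
        rw [← hc', Complex.conj_conj]
        field_simp
      · field_simp
      · rw [htr, div_mul_div_comm, Complex.mul_conj, hnsqc, hss, eq_div_iff hrne]
        push_cast
        ring
    · simp only [dotProduct, Fin.sum_univ_two, Pi.star_apply, Matrix.cons_val_zero,
        Matrix.cons_val_one, Matrix.head_cons, Complex.star_def]
      rw [Complex.conj_ofReal, map_div₀, Complex.conj_ofReal, ← Complex.ofReal_mul, hs2,
        div_mul_div_comm, mul_comm ((starRingEnd ℂ) (Q 1 0)) (Q 1 0), Complex.mul_conj,
        hnsqc, hss]
      field_simp
      push_cast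
      ring

lemma aux_measfam_decomp (Q : Fin 2 → Matrix (Fin 2) (Fin 2) ℂ) (hQ : MeasFam Q) :
    ∃ u : Fin 2 → Fin 2 → ℂ, (∀ i, Q i = Matrix.vecMulVec (u i) (star (u i))) ∧
      (∀ i j, star (u i) ⬝ᵥ u j = if i = j then 1 else 0) := by
  obtain ⟨hH, hI, hO, _, hT⟩ := hQ
  choose u hu hnorm using fun i => aux_rankone (Q i) (hH i) (hI i) (hT i)
  refine ⟨u, hu, fun i j => ?_⟩
  by_cases hij : i = j
  · subst hij; simp [hnorm i]
  · simp only [if_neg hij]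
    have h0 : Matrix.vecMulVec (u i) (star (u i)) * Matrix.vecMulVec (u j) (star (u j)) = 0 := by
      rw [← hu i, ← hu j]; exact hO i j hij
    rw [aux_vmv_mul] at h0
    obtain ⟨ki, hki⟩ : ∃ k, u i k ≠ 0 := by
      by_contra h
      push_neg at h
      have : star (u i) ⬝ᵥ u i = 0 := by
        simp [dotProduct, h]
      rw [hnorm i] at this
      exact one_ne_zero this
    obtain ⟨kj, hkj⟩ : ∃ k, u j k ≠ 0 := by
      by_contra h
      push_neg at h
      have : star (u j) ⬝ᵥ u j = 0 := by
        simp [dotProduct, h]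
      rw [hnorm j] at this
      exact one_ne_zero this
    have := congrFun (congrFun h0 ki) kj
    simp only [Matrix.smul_apply, Matrix.vecMulVec_apply, Pi.star_apply, smul_eq_mul,
      Matrix.zero_apply] at this
    rcases mul_eq_zero.mp this with h | h
    · exact h
    · rcases mul_eq_zero.mp h with h' | h'
      · exact absurd h' hki
      · exact absurd h' (by simpa using hkj)

noncomputable def vvec (u1 u2 u3 : Fin 2 → Fin 2 → ℂ) (s : Fin 2 × Fin 2 × Fin 2) :
    Fin 2 × Fin 2 × Fin 2 → ℂ :=
  fun x => u1 s.1 x.1 * (u2 s.2.1 x.2.1 * u3 s.2.2 x.2.2)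

noncomputable def pfun (u1 u2 u3 : Fin 2 → Fin 2 → ℂ) (s : Fin 2 × Fin 2 × Fin 2) : ℝ :=
  Complex.normSq (star (vvec u1 u2 u3 s) ⬝ᵥ ghz)

noncomputable def Vmat (u1 u2 u3 : Fin 2 → Fin 2 → ℂ) :
    Matrix (Fin 2 × Fin 2 × Fin 2) (Fin 2 × Fin 2 × Fin 2) ℂ :=
  Matrix.of fun x s => vvec u1 u2 u3 s x

lemma aux_hexp (f g h : Fin 2 → ℂ) :
    (∑ a, f a) * ((∑ b, g b) * (∑ c, h c)) = ∑ a, ∑ b, ∑ c, f a * (g b * h c) := by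
  simp [Finset.sum_mul, Finset.mul_sum, Fin.sum_univ_two]
  ring

section struct
variable (Q1 Q2 Q3 : Fin 2 → Matrix (Fin 2) (Fin 2) ℂ) (u1 u2 u3 : Fin 2 → Fin 2 → ℂ)

lemma aux_kron_eq_vmv (hd1 : ∀ k, Q1 k = Matrix.vecMulVec (u1 k) (star (u1 k)))
    (hd2 : ∀ k, Q2 k = Matrix.vecMulVec (u2 k) (star (u2 k)))
    (hd3 : ∀ k, Q3 k = Matrix.vecMulVec (u3 k) (star (u3 k)))
    (s : Fin 2 × Fin 2 × Fin 2) :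
    Q1 s.1 ⊗ₖ (Q2 s.2.1 ⊗ₖ Q3 s.2.2)
      = Matrix.vecMulVec (vvec u1 u2 u3 s) (star (vvec u1 u2 u3 s)) := by
  rw [hd1, hd2, hd3, aux_kron_vmv, aux_kron_vmv]
  rfl

lemma aux_dot_vvec (s t : Fin 2 × Fin 2 × Fin 2) :
    star (vvec u1 u2 u3 s) ⬝ᵥ vvec u1 u2 u3 t
      = (star (u1 s.1) ⬝ᵥ u1 t.1) *
        ((star (u2 s.2.1) ⬝ᵥ u2 t.2.1) * (star (u3 s.2.2) ⬝ᵥ u3 t.2.2)) := by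
  rw [dotProduct, dotProduct, dotProduct, dotProduct, aux_hexp]
  simp only [vvec, Pi.star_apply, Fintype.sum_prod_type, star_mul']
  refine Finset.sum_congr rfl fun a _ => Finset.sum_congr rfl fun b _ =>
    Finset.sum_congr rfl fun c _ => by ring

lemma aux_Vmat_unitary
    (ho1 : ∀ i j, star (u1 i) ⬝ᵥ u1 j = if i = j then 1 else 0)
    (ho2 : ∀ i j, star (u2 i) ⬝ᵥ u2 j = if i = j then 1 else 0)
    (ho3 : ∀ i j, star (u3 i) ⬝ᵥ u3 j = if i = j then 1 else 0) :
    Vmat u1 u2 u3 ∈ Matrix.unitaryGroup (Fin 2 × Fin 2 × Fin 2) ℂ := by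
  rw [Matrix.mem_unitaryGroup_iff']
  ext s t
  have key : (star (Vmat u1 u2 u3) * Vmat u1 u2 u3) s t
      = star (vvec u1 u2 u3 s) ⬝ᵥ vvec u1 u2 u3 t := by
    simp [Matrix.mul_apply, Matrix.star_apply, Vmat, dotProduct]
  rw [key, aux_dot_vvec, ho1, ho2, ho3]
  obtain ⟨s1, s2, s3⟩ := s
  obtain ⟨t1, t2, t3⟩ := t
  by_cases h1 : s1 = t1 <;> by_cases h2 : s2 = t2 <;> by_cases h3 : s3 = t3 <;>
    simp [Matrix.one_apply, Prod.ext_iff, h1, h2, h3]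

lemma aux_phi3_struct (hd1 : ∀ k, Q1 k = Matrix.vecMulVec (u1 k) (star (u1 k)))
    (hd2 : ∀ k, Q2 k = Matrix.vecMulVec (u2 k) (star (u2 k)))
    (hd3 : ∀ k, Q3 k = Matrix.vecMulVec (u3 k) (star (u3 k))) :
    phi3 Q1 Q2 Q3 ghzState
      = Vmat u1 u2 u3 * Matrix.diagonal (fun s => ((pfun u1 u2 u3 s : ℝ) : ℂ))
          * star (Vmat u1 u2 u3) := by
  have hterm : ∀ s : Fin 2 × Fin 2 × Fin 2,
      (Q1 s.1 ⊗ₖ (Q2 s.2.1 ⊗ₖ Q3 s.2.2)) * ghzState * (Q1 s.1 ⊗ₖ (Q2 s.2.1 ⊗ₖ Q3 s.2.2))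
        = ((pfun u1 u2 u3 s : ℝ) : ℂ)
            • Matrix.vecMulVec (vvec u1 u2 u3 s) (star (vvec u1 u2 u3 s)) := by
    intro s
    rw [aux_kron_eq_vmv Q1 Q2 Q3 u1 u2 u3 hd1 hd2 hd3 s, ghzState, aux_vmv_mul,
      Matrix.smul_mul, aux_vmv_mul, smul_smul]
    congr 1
    have hsw : star ghz ⬝ᵥ vvec u1 u2 u3 s = star (star (vvec u1 u2 u3 s) ⬝ᵥ ghz) := by
      simp [dotProduct, star_sum, mul_comm]
    rw [hsw, pfun, Complex.star_def, Complex.mul_conj]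
  rw [phi3, Finset.sum_congr rfl (fun s _ => hterm s)]
  ext x y
  have hrhs : (Vmat u1 u2 u3 * Matrix.diagonal (fun s => ((pfun u1 u2 u3 s : ℝ) : ℂ))
      * star (Vmat u1 u2 u3)) x y
      = ∑ s, Vmat u1 u2 u3 x s * ((pfun u1 u2 u3 s : ℝ) : ℂ) * star (Vmat u1 u2 u3 y s) := by
    rw [Matrix.mul_apply]
    refine Finset.sum_congr rfl fun s _ => ?_
    rw [Matrix.mul_diagonal, Matrix.star_apply]
  rw [hrhs]
  simp only [Matrix.sum_apply, Matrix.smul_apply, Matrix.vecMulVec_apply, Pi.star_apply,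
    smul_eq_mul, Vmat, Matrix.of_apply]
  refine Finset.sum_congr rfl fun s _ => by ring
end struct

lemma aux_dot_ghz (u1 u2 u3 : Fin 2 → Fin 2 → ℂ) (s : Fin 2 × Fin 2 × Fin 2) :
    star (vvec u1 u2 u3 s) ⬝ᵥ ghz
      = (((Real.sqrt 2)⁻¹ : ℝ) : ℂ) *
          (star (vvec u1 u2 u3 s (0, 0, 0)) + star (vvec u1 u2 u3 s (1, 1, 1))) := by
  simp only [dotProduct, Pi.star_apply, ghz, Fintype.sum_prod_type, Fin.sum_univ_two]
  norm_num [Prod.ext_iff]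
  ring

lemma aux_norm_one_of_dot (u : Fin 2 → ℂ) (h : star u ⬝ᵥ u = 1) :
    ‖u 0‖ ^ 2 + ‖u 1‖ ^ 2 = 1 := by
  have h2 : (starRingEnd ℂ) (u 0) * u 0 + (starRingEnd ℂ) (u 1) * u 1 = 1 := by
    simpa [dotProduct, Fin.sum_univ_two] using h
  have h3 : ((Complex.normSq (u 0) + Complex.normSq (u 1) : ℝ) : ℂ) = 1 := by
    push_cast
    rw [Complex.normSq_eq_conj_mul_self, Complex.normSq_eq_conj_mul_self]
    exact h2
  have h4 : Complex.normSq (u 0) + Complex.normSq (u 1) = 1 := by exact_mod_cast h3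
  rw [Complex.sq_norm, Complex.sq_norm]
  exact h4

set_option maxHeartbeats 2000000 in
lemma aux_pfun_le (u1 u2 u3 : Fin 2 → Fin 2 → ℂ)
    (hn1 : ∀ k, star (u1 k) ⬝ᵥ u1 k = 1)
    (hn2 : ∀ k, star (u2 k) ⬝ᵥ u2 k = 1)
    (hn3 : ∀ k, star (u3 k) ⬝ᵥ u3 k = 1)
    (s : Fin 2 × Fin 2 × Fin 2) : pfun u1 u2 u3 s ≤ 1 / 2 := by
  set x1 := ‖u1 s.1 0‖; set y1 := ‖u1 s.1 1‖
  set x2 := ‖u2 s.2.1 0‖; set y2 := ‖u2 s.2.1 1‖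
  set x3 := ‖u3 s.2.2 0‖; set y3 := ‖u3 s.2.2 1‖
  have hs1 : x1 ^ 2 + y1 ^ 2 = 1 := aux_norm_one_of_dot _ (hn1 s.1)
  have hs2 : x2 ^ 2 + y2 ^ 2 = 1 := aux_norm_one_of_dot _ (hn2 s.2.1)
  have hs3 : x3 ^ 2 + y3 ^ 2 = 1 := aux_norm_one_of_dot _ (hn3 s.2.2)
  have hx1 : 0 ≤ x1 := norm_nonneg _
  have hy1 : 0 ≤ y1 := norm_nonneg _
  have hx2 : 0 ≤ x2 := norm_nonneg _
  have hy2 : 0 ≤ y2 := norm_nonneg _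
  have hx3 : 0 ≤ x3 := norm_nonneg _
  have hy3 : 0 ≤ y3 := norm_nonneg _
  have habsA : ‖vvec u1 u2 u3 s (0, 0, 0)‖ = x1 * (x2 * x3) := by
    simp [vvec, _root_.map_mul, x1, x2, x3]
  have habsB : ‖vvec u1 u2 u3 s (1, 1, 1)‖ = y1 * (y2 * y3) := by
    simp [vvec, _root_.map_mul, y1, y2, y3]
  have hc : ‖star (vvec u1 u2 u3 s) ⬝ᵥ ghz‖
      ≤ (Real.sqrt 2)⁻¹ * (x1 * (x2 * x3) + y1 * (y2 * y3)) := by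
    rw [aux_dot_ghz, norm_mul]
    have e1 : ‖(((Real.sqrt 2)⁻¹ : ℝ) : ℂ)‖ = (Real.sqrt 2)⁻¹ := by
      rw [Complex.norm_real, Real.norm_of_nonneg]
      positivity
    rw [e1]
    gcongr
    calc ‖star (vvec u1 u2 u3 s (0, 0, 0)) + star (vvec u1 u2 u3 s (1, 1, 1))‖
        ≤ ‖star (vvec u1 u2 u3 s (0, 0, 0))‖
          + ‖star (vvec u1 u2 u3 s (1, 1, 1))‖ := norm_add_le _ _
      _ = x1 * (x2 * x3) + y1 * (y2 * y3) := by
          simp only [Complex.star_def, Complex.norm_conj, habsA, habsB]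
  have hsq : (x1 * (x2 * x3) + y1 * (y2 * y3)) ^ 2 ≤ 1 := by
    have e1 : (x1 * (x2 * x3) + y1 * (y2 * y3)) ^ 2 ≤ (x2 * x3) ^ 2 + (y2 * y3) ^ 2 := by
      nlinarith [sq_nonneg (x1 * (y2 * y3) - y1 * (x2 * x3))]
    have e2 : (x2 * x3) ^ 2 + (y2 * y3) ^ 2 ≤ 1 := by
      nlinarith [mul_nonneg (sq_nonneg x2) (by nlinarith [sq_nonneg y3] : (0:ℝ) ≤ 1 - x3 ^ 2),
        mul_nonneg (sq_nonneg y2) (by nlinarith [sq_nonneg x3] : (0:ℝ) ≤ 1 - y3 ^ 2)]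
    linarith
  have hfin : pfun u1 u2 u3 s
      ≤ ((Real.sqrt 2)⁻¹ * (x1 * (x2 * x3) + y1 * (y2 * y3))) ^ 2 := by
    rw [pfun, ← Complex.sq_norm]
    have := norm_nonneg (star (vvec u1 u2 u3 s) ⬝ᵥ ghz)
    nlinarith [hc]
  have h2 : ((Real.sqrt 2)⁻¹) ^ 2 = 1 / 2 := by
    rw [inv_pow, sq, Real.mul_self_sqrt (by norm_num : (0:ℝ) ≤ 2)]
    norm_num
  calc pfun u1 u2 u3 s ≤ ((Real.sqrt 2)⁻¹ * (x1 * (x2 * x3) + y1 * (y2 * y3))) ^ 2 := hfin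
    _ = ((Real.sqrt 2)⁻¹) ^ 2 * (x1 * (x2 * x3) + y1 * (y2 * y3)) ^ 2 := by ring
    _ ≤ 1 / 2 * 1 := by
        rw [h2]
        have hnn : 0 ≤ (x1 * (x2 * x3) + y1 * (y2 * y3)) ^ 2 := sq_nonneg _
        nlinarith
    _ = 1 / 2 := by norm_num

lemma aux_pfun_nonneg (u1 u2 u3 : Fin 2 → Fin 2 → ℂ) (s : Fin 2 × Fin 2 × Fin 2) :
    0 ≤ pfun u1 u2 u3 s := Complex.normSq_nonneg _

lemma aux_trace_ghzState : Matrix.trace ghzState = 1 := by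
  rw [ghzState, Matrix.trace]
  simp only [Matrix.diag_apply, Matrix.vecMulVec_apply, Pi.star_apply, ghz,
    Fintype.sum_prod_type, Fin.sum_univ_two]
  norm_num [Prod.ext_iff]
  have e : ((Real.sqrt 2 : ℝ) : ℂ)⁻¹ * ((Real.sqrt 2 : ℝ) : ℂ)⁻¹ = 1 / 2 := by
    rw [← mul_inv, ← Complex.ofReal_mul, Real.mul_self_sqrt (by norm_num : (0:ℝ) ≤ 2)]
    norm_num
  rw [e]
  norm_num

lemma aux_sum_P_eq_one (Q1 Q2 Q3 : Fin 2 → Matrix (Fin 2) (Fin 2) ℂ)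
    (hs1 : ∑ i, Q1 i = 1) (hs2 : ∑ i, Q2 i = 1) (hs3 : ∑ i, Q3 i = 1) :
    (∑ s : Fin 2 × Fin 2 × Fin 2, Q1 s.1 ⊗ₖ (Q2 s.2.1 ⊗ₖ Q3 s.2.2)) = 1 := by
  ext x y
  obtain ⟨x1, x2, x3⟩ := x
  obtain ⟨y1, y2, y3⟩ := y
  have e1 : ∑ a, Q1 a x1 y1 = (1 : Matrix (Fin 2) (Fin 2) ℂ) x1 y1 := by
    rw [← hs1]; simp [Matrix.sum_apply]
  have e2 : ∑ a, Q2 a x2 y2 = (1 : Matrix (Fin 2) (Fin 2) ℂ) x2 y2 := by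
    rw [← hs2]; simp [Matrix.sum_apply]
  have e3 : ∑ a, Q3 a x3 y3 = (1 : Matrix (Fin 2) (Fin 2) ℂ) x3 y3 := by
    rw [← hs3]; simp [Matrix.sum_apply]
  have lhs : (∑ s : Fin 2 × Fin 2 × Fin 2,
      Q1 s.1 ⊗ₖ (Q2 s.2.1 ⊗ₖ Q3 s.2.2)) (x1, x2, x3) (y1, y2, y3)
      = (∑ a, Q1 a x1 y1) * ((∑ b, Q2 b x2 y2) * (∑ c, Q3 c x3 y3)) := by
    rw [aux_hexp]
    simp [Matrix.sum_apply, Fintype.sum_prod_type, Matrix.kroneckerMap_apply]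
  rw [lhs, e1, e2, e3]
  by_cases h1 : x1 = y1 <;> by_cases h2 : x2 = y2 <;> by_cases h3 : x3 = y3 <;>
    simp [Matrix.one_apply, Prod.ext_iff, h1, h2, h3]

lemma aux_trace_phi3 (Q1 Q2 Q3 : Fin 2 → Matrix (Fin 2) (Fin 2) ℂ)
    (hi1 : ∀ i, Q1 i * Q1 i = Q1 i) (hi2 : ∀ i, Q2 i * Q2 i = Q2 i)
    (hi3 : ∀ i, Q3 i * Q3 i = Q3 i)
    (hs1 : ∑ i, Q1 i = 1) (hs2 : ∑ i, Q2 i = 1) (hs3 : ∑ i, Q3 i = 1) :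
    Matrix.trace (phi3 Q1 Q2 Q3 ghzState) = 1 := by
  rw [phi3, Matrix.trace_sum]
  have hterm : ∀ s : Fin 2 × Fin 2 × Fin 2,
      Matrix.trace ((Q1 s.1 ⊗ₖ (Q2 s.2.1 ⊗ₖ Q3 s.2.2)) * ghzState
        * (Q1 s.1 ⊗ₖ (Q2 s.2.1 ⊗ₖ Q3 s.2.2)))
      = Matrix.trace ((Q1 s.1 ⊗ₖ (Q2 s.2.1 ⊗ₖ Q3 s.2.2)) * ghzState) := by
    intro s
    rw [Matrix.trace_mul_cycle, ← Matrix.mul_kronecker_mul, ← Matrix.mul_kronecker_mul,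
      hi1, hi2, hi3]
  rw [Finset.sum_congr rfl fun s _ => hterm s, ← Matrix.trace_sum, ← Finset.sum_mul,
    aux_sum_P_eq_one Q1 Q2 Q3 hs1 hs2 hs3, one_mul, aux_trace_ghzState]

lemma aux_sum_pfun (Q1 Q2 Q3 : Fin 2 → Matrix (Fin 2) (Fin 2) ℂ) (u1 u2 u3 : Fin 2 → Fin 2 → ℂ)
    (hstruct : phi3 Q1 Q2 Q3 ghzState
      = Vmat u1 u2 u3 * Matrix.diagonal (fun s => ((pfun u1 u2 u3 s : ℝ) : ℂ))
          * star (Vmat u1 u2 u3))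
    (hunit : Vmat u1 u2 u3 ∈ Matrix.unitaryGroup (Fin 2 × Fin 2 × Fin 2) ℂ)
    (hi1 : ∀ i, Q1 i * Q1 i = Q1 i) (hi2 : ∀ i, Q2 i * Q2 i = Q2 i)
    (hi3 : ∀ i, Q3 i * Q3 i = Q3 i)
    (hs1 : ∑ i, Q1 i = 1) (hs2 : ∑ i, Q2 i = 1) (hs3 : ∑ i, Q3 i = 1) :
    ∑ s : Fin 2 × Fin 2 × Fin 2, pfun u1 u2 u3 s = 1 := by
  have h1 : Matrix.trace (phi3 Q1 Q2 Q3 ghzState) = 1 :=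
    aux_trace_phi3 Q1 Q2 Q3 hi1 hi2 hi3 hs1 hs2 hs3
  have h2 : Matrix.trace (Vmat u1 u2 u3
      * Matrix.diagonal (fun s => ((pfun u1 u2 u3 s : ℝ) : ℂ)) * star (Vmat u1 u2 u3))
      = ∑ s : Fin 2 × Fin 2 × Fin 2, ((pfun u1 u2 u3 s : ℝ) : ℂ) := by
    rw [Matrix.trace_mul_cycle, (Matrix.mem_unitaryGroup_iff').mp hunit, one_mul,
      Matrix.trace_diagonal]
  have h3 : ((∑ s : Fin 2 × Fin 2 × Fin 2, pfun u1 u2 u3 s : ℝ) : ℂ) = 1 := by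
    push_cast
    rw [← h2, ← hstruct, h1]
  exact_mod_cast h3

lemma aux_master (Q1 Q2 Q3 : Fin 2 → Matrix (Fin 2) (Fin 2) ℂ)
    (h1 : MeasFam Q1) (h2 : MeasFam Q2) (h3 : MeasFam Q3) :
    ∃ p : Fin 2 × Fin 2 × Fin 2 → ℝ, (∀ s, 0 ≤ p s) ∧ (∀ s, p s ≤ 1 / 2) ∧
      (∑ s, p s = 1) ∧
      vN (phi3 Q1 Q2 Q3 ghzState) = -∑ s, p s * Real.logb 2 (p s) := by
  obtain ⟨u1, hd1, ho1⟩ := aux_measfam_decomp Q1 h1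
  obtain ⟨u2, hd2, ho2⟩ := aux_measfam_decomp Q2 h2
  obtain ⟨u3, hd3, ho3⟩ := aux_measfam_decomp Q3 h3
  have hn1 : ∀ k, star (u1 k) ⬝ᵥ u1 k = 1 := fun k => by simpa using ho1 k k
  have hn2 : ∀ k, star (u2 k) ⬝ᵥ u2 k = 1 := fun k => by simpa using ho2 k k
  have hn3 : ∀ k, star (u3 k) ⬝ᵥ u3 k = 1 := fun k => by simpa using ho3 k k
  have hstruct := aux_phi3_struct Q1 Q2 Q3 u1 u2 u3 hd1 hd2 hd3
  have hunit := aux_Vmat_unitary u1 u2 u3 ho1 ho2 ho3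
  refine ⟨pfun u1 u2 u3, aux_pfun_nonneg u1 u2 u3,
    aux_pfun_le u1 u2 u3 hn1 hn2 hn3,
    aux_sum_pfun Q1 Q2 Q3 u1 u2 u3 hstruct hunit h1.2.1 h2.2.1 h3.2.1
      h1.2.2.2.1 h2.2.2.2.1 h3.2.2.2.1, ?_⟩
  exact aux_vN_conj_diag (Vmat u1 u2 u3) hunit (pfun u1 u2 u3) _ hstruct

noncomputable def Qzdef : Fin 2 → Matrix (Fin 2) (Fin 2) ℂ :=
  fun i => Matrix.diagonal (fun j => if j = i then 1 else 0)

noncomputable def uzdef : Fin 2 → Fin 2 → ℂ := fun i j => if j = i then 1 else 0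

lemma aux_measfam_Qz : MeasFam Qzdef := by
  refine ⟨?_, ?_, ?_, ?_, ?_⟩
  · intro i
    refine Matrix.isHermitian_diagonal_iff.mpr fun j => ?_
    by_cases h : j = i
    · simpa [Qzdef, h] using (isSelfAdjoint_one ℂ)
    · simpa [Qzdef, h] using (isSelfAdjoint_zero ℂ)
  · intro i
    unfold Qzdef
    rw [Matrix.diagonal_mul_diagonal]
    ext a b
    by_cases hab : a = b
    · subst hab
      by_cases hai : a = i <;> simp [Matrix.diagonal_apply, hai]
    · simp [Matrix.diagonal_apply, hab]
  · intro i j hij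
    unfold Qzdef
    rw [Matrix.diagonal_mul_diagonal]
    have e : (fun k => (if k = i then (1:ℂ) else 0) * (if k = j then 1 else 0))
        = fun _ => (0 : ℂ) := by
      funext k
      by_cases h1 : k = i
      · by_cases h2 : k = j
        · exact absurd (h1.symm.trans h2) hij
        · simp [h1, h2, hij]
      · simp [h1, hij]
    rw [e, Matrix.diagonal_zero]
  · rw [Fin.sum_univ_two]
    unfold Qzdef
    rw [Matrix.diagonal_add]
    have e : (fun k => (if k = (0 : Fin 2) then (1:ℂ) else 0) + if k = 1 then 1 else 0)
        = fun _ => (1 : ℂ) := by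
      funext k
      fin_cases k <;> norm_num
    rw [e, Matrix.diagonal_one]
  · intro i
    unfold Qzdef
    rw [Matrix.trace_diagonal]
    simp

lemma aux_hdz : ∀ i, Qzdef i = Matrix.vecMulVec (uzdef i) (star (uzdef i)) := by
  intro i
  ext j k
  unfold Qzdef uzdef
  by_cases hj : j = i
  · by_cases hk : k = i
    · simp [Matrix.diagonal_apply, Matrix.vecMulVec_apply, hj, hk]
    · have hne : j ≠ k := fun h => hk (h ▸ hj)
      have hik : ¬ i = k := fun h => hk h.symm
      simp [Matrix.diagonal_apply, Matrix.vecMulVec_apply, hj, hk, hne, hik]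
  · by_cases hk : k = i
    · have hne : j ≠ k := fun h => hj (h.symm ▸ hk)
      have hji : ¬ j = i := hj
      simp [Matrix.diagonal_apply, Matrix.vecMulVec_apply, hj, hk, hne, hji]
    · by_cases hjk : j = k <;>
        simp [Matrix.diagonal_apply, Matrix.vecMulVec_apply, hj, hk, hjk]

lemma aux_hoz : ∀ i j, star (uzdef i) ⬝ᵥ uzdef j = if i = j then 1 else 0 := by
  intro i j
  fin_cases i <;> fin_cases j <;>
    simp [uzdef, dotProduct, Fin.sum_univ_two]

/-- the global quantum discord of the GHZ state equals 1: the minimum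
over all local product projective measurements of `S(Φ(ρ))` is `1`, attained for some
measurement (the `σ^z` eigenbasis on each qubit). -/
theorem stmt14 :
    (∀ Q1 Q2 Q3 : Fin 2 → Matrix (Fin 2) (Fin 2) ℂ,
      MeasFam Q1 → MeasFam Q2 → MeasFam Q3 → 1 ≤ vN (phi3 Q1 Q2 Q3 ghzState)) ∧
    (∃ Q1 Q2 Q3 : Fin 2 → Matrix (Fin 2) (Fin 2) ℂ,
      MeasFam Q1 ∧ MeasFam Q2 ∧ MeasFam Q3 ∧ vN (phi3 Q1 Q2 Q3 ghzState) = 1) := by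
  constructor
  · intro Q1 Q2 Q3 hQ1 hQ2 hQ3
    obtain ⟨p, hp0, hple, hpsum, hvn⟩ := aux_master Q1 Q2 Q3 hQ1 hQ2 hQ3
    rw [hvn]
    have key : ∀ s : Fin 2 × Fin 2 × Fin 2, p s ≤ -(p s * Real.logb 2 (p s)) := by
      intro s
      rcases eq_or_lt_of_le (hp0 s) with h | h
      · rw [← h]; simp
      · have h12 : Real.logb 2 (1 / 2 : ℝ) = -1 := by
          rw [show (1/2 : ℝ) = 2⁻¹ by norm_num, Real.logb_inv,
            Real.logb_self_eq_one (by norm_num)]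
        have hlog : Real.logb 2 (p s) ≤ -1 := by
          have := Real.logb_le_logb_of_le (b := 2) (by norm_num) h (hple s)
          rw [h12] at this
          exact this
        nlinarith [mul_le_mul_of_nonneg_left hlog (le_of_lt h)]
    calc (1 : ℝ) = ∑ s, p s := hpsum.symm
      _ ≤ ∑ s, -(p s * Real.logb 2 (p s)) := Finset.sum_le_sum (fun s _ => key s)
      _ = -∑ s, p s * Real.logb 2 (p s) := by rw [Finset.sum_neg_distrib]
  · have hmf : MeasFam Qzdef := aux_measfam_Qz
    have hdz := aux_hdz
    have hoz := aux_hoz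
    have hunit := aux_Vmat_unitary uzdef uzdef uzdef hoz hoz hoz
    have hstruct := aux_phi3_struct Qzdef Qzdef Qzdef uzdef uzdef uzdef hdz hdz hdz
    have hvn := aux_vN_conj_diag (Vmat uzdef uzdef uzdef) hunit (pfun uzdef uzdef uzdef) _ hstruct
    refine ⟨Qzdef, Qzdef, Qzdef, hmf, hmf, hmf, ?_⟩
    rw [hvn]
    have hv : ∀ s x : Fin 2 × Fin 2 × Fin 2, vvec uzdef uzdef uzdef s x = if x = s then 1 else 0 := by
      rintro ⟨s1, s2, s3⟩ ⟨x1, x2, x3⟩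
      by_cases h1 : x1 = s1 <;> by_cases h2 : x2 = s2 <;> by_cases h3 : x3 = s3 <;>
        simp [vvec, uzdef, Prod.ext_iff, h1, h2, h3]
    have hhalf : ((Real.sqrt 2)⁻¹ : ℝ) * ((Real.sqrt 2)⁻¹ : ℝ) = 1 / 2 := by
      rw [← mul_inv, Real.mul_self_sqrt (by norm_num : (0:ℝ) ≤ 2)]
      norm_num
    have hpz : ∀ s, pfun uzdef uzdef uzdef s = if s = (0, 0, 0) ∨ s = (1, 1, 1) then 1 / 2 else 0 := by
      intro s
      rw [pfun, aux_dot_ghz, hv, hv]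
      by_cases h0 : s = (0, 0, 0)
      · subst h0
        norm_num [Complex.normSq_ofReal, hhalf]
      · by_cases h1 : s = (1, 1, 1)
        · subst h1
          norm_num [Complex.normSq_ofReal, hhalf]
        · have e0 : ((0, 0, 0) : Fin 2 × Fin 2 × Fin 2) ≠ s := fun h => h0 h.symm
          have e1 : ((1, 1, 1) : Fin 2 × Fin 2 × Fin 2) ≠ s := fun h => h1 h.symm
          rw [if_neg e0, if_neg e1]
          rw [if_neg (by tauto : ¬(s = (0, 0, 0) ∨ s = (1, 1, 1)))]
          simp
    rw [Finset.sum_congr rfl (fun s _ => by rw [hpz s])]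
    have h12 : Real.logb 2 (1 / 2 : ℝ) = -1 := by
      rw [show (1/2 : ℝ) = 2⁻¹ by norm_num, Real.logb_inv,
        Real.logb_self_eq_one (by norm_num)]
    rw [show (Finset.univ : Finset (Fin 2 × Fin 2 × Fin 2)).sum
        (fun s => (if s = (0, 0, 0) ∨ s = (1, 1, 1) then (1/2 : ℝ) else 0) *
          Real.logb 2 (if s = (0, 0, 0) ∨ s = (1, 1, 1) then (1/2 : ℝ) else 0))
        = 2 * ((1/2 : ℝ) * Real.logb 2 (1/2 : ℝ)) by
      rw [Fintype.sum_prod_type]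
      simp only [Fintype.sum_prod_type, Fin.sum_univ_two]
      norm_num [Prod.ext_iff]
      ring]
    rw [h12]
    norm_num
end

section
/- The function D(μ) = −(1/4)(1+3μ)log₂(1+3μ) + (1/8)(1−μ)log₂(1−μ) + (1/8)(1+7μ)log₂(1+7μ) on [0,1] is non-negative, vanishes only at μ = 0, is monotonically increasing, and satisfies D(1) = 1. -/
open scoped Kronecker
open Matrix
open scoped ComplexOrder

/-- The global quantum discord of the Werner-GHZ state as a function of `μ`. -/
noncomputable def Dw (μ : ℝ) : ℝ :=
  -(1 / 4) * (1 + 3 * μ) * Real.logb 2 (1 + 3 * μ)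
    + (1 / 8) * (1 - μ) * Real.logb 2 (1 - μ)
    + (1 / 8) * (1 + 7 * μ) * Real.logb 2 (1 + 7 * μ)

lemma Dw_eq : Dw = fun μ =>
    (-(1/4) * ((1+3*μ) * Real.log (1+3*μ)) + (1/8) * ((1-μ) * Real.log (1-μ))
      + (1/8) * ((1+7*μ) * Real.log (1+7*μ))) / Real.log 2 := by
  funext μ
  simp only [Dw, Real.logb]
  ring

lemma Dw_cont : Continuous Dw := by
  rw [Dw_eq]
  apply Continuous.div_const
  apply Continuous.add
  apply Continuous.add
  · exact continuous_const.mul (Real.continuous_mul_log.comp (by continuity))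
  · exact continuous_const.mul (Real.continuous_mul_log.comp (by continuity))
  · exact continuous_const.mul (Real.continuous_mul_log.comp (by continuity))

lemma Dw_hasDeriv {μ : ℝ} (h0 : 0 < μ) (h1 : μ < 1) :
    HasDerivAt Dw ((-(3/4) * Real.log (1+3*μ) - (1/8) * Real.log (1-μ)
      + (7/8) * Real.log (1+7*μ)) / Real.log 2) μ := by
  have p3 : (0:ℝ) < 1 + 3*μ := by linarith
  have p1 : (0:ℝ) < 1 - μ := by linarith
  have p7 : (0:ℝ) < 1 + 7*μ := by linarith
  have a3 : HasDerivAt (fun μ : ℝ => 1 + 3*μ) 3 μ := by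
    simpa using ((hasDerivAt_id μ).const_mul 3).const_add 1
  have a1 : HasDerivAt (fun μ : ℝ => 1 - μ) (-1) μ := by
    simpa using ((hasDerivAt_id μ)).const_sub 1
  have a7 : HasDerivAt (fun μ : ℝ => 1 + 7*μ) 7 μ := by
    simpa using ((hasDerivAt_id μ).const_mul 7).const_add 1
  have l3 : HasDerivAt (fun μ : ℝ => Real.log (1+3*μ)) ((1+3*μ)⁻¹ * 3) μ :=
    (a3.log p3.ne').congr_deriv (by ring)
  have l1 : HasDerivAt (fun μ : ℝ => Real.log (1-μ)) ((1-μ)⁻¹ * (-1)) μ :=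
    (Real.hasDerivAt_log p1.ne').comp μ a1
  have l7 : HasDerivAt (fun μ : ℝ => Real.log (1+7*μ)) ((1+7*μ)⁻¹ * 7) μ :=
    (a7.log p7.ne').congr_deriv (by ring)
  have m3 := a3.mul l3
  have m1 := a1.mul l1
  have m7 := a7.mul l7
  have h := (((m3.const_mul (-(1/4) : ℝ)).add (m1.const_mul ((1/8) : ℝ))).add
    (m7.const_mul ((1/8) : ℝ))).div_const (Real.log 2)
  rw [Dw_eq]
  refine (h.congr_of_eventuallyEq (Filter.Eventually.of_forall fun x => rfl)).congr_deriv ?_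
  field_simp
  ring

lemma key {μ : ℝ} (h0 : 0 < μ) (h1 : μ < 1) : (1+3*μ)^6 * (1-μ) < (1+7*μ)^7 := by
  nlinarith [pow_pos h0 2, pow_pos h0 3, pow_pos h0 4, pow_pos h0 5, pow_pos h0 6,
    pow_pos h0 7, h0.le, h1.le]

lemma deriv_pos {μ : ℝ} (h0 : 0 < μ) (h1 : μ < 1) : 0 < deriv Dw μ := by
  rw [(Dw_hasDeriv h0 h1).deriv]
  have p3 : (0:ℝ) < 1 + 3*μ := by linarith
  have p1 : (0:ℝ) < 1 - μ := by linarith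
  have p7 : (0:ℝ) < 1 + 7*μ := by linarith
  apply div_pos _ (Real.log_pos one_lt_two)
  have hlt := Real.log_lt_log (by positivity) (key h0 h1)
  rw [Real.log_mul (by positivity) p1.ne', Real.log_pow, Real.log_pow] at hlt
  push_cast at hlt
  linarith

lemma Dw_strictMono : StrictMonoOn Dw (Set.Icc (0:ℝ) 1) := by
  apply strictMonoOn_of_deriv_pos (convex_Icc 0 1) Dw_cont.continuousOn
  intro x hx
  rw [interior_Icc] at hx
  exact deriv_pos hx.1 hx.2

lemma Dw_zero : Dw 0 = 0 := by norm_num [Dw]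

lemma Dw_one : Dw 1 = 1 := by
  have h4 : Real.logb 2 4 = 2 := by
    rw [show (4:ℝ) = 2^(2:ℕ) by norm_num, Real.logb_pow, Real.logb_self_eq_one] <;> norm_num
  have h8 : Real.logb 2 8 = 3 := by
    rw [show (8:ℝ) = 2^(3:ℕ) by norm_num, Real.logb_pow, Real.logb_self_eq_one] <;> norm_num
  norm_num [Dw, h4, h8]


/-- on `[0,1]`, `D(μ)` is non-negative, vanishes only at `μ = 0`,
is monotonically increasing, and `D(1) = 1`. -/
theorem stmt17 :
    (∀ μ ∈ Set.Icc (0 : ℝ) 1, 0 ≤ Dw μ) ∧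
    (∀ μ ∈ Set.Icc (0 : ℝ) 1, Dw μ = 0 ↔ μ = 0) ∧
    MonotoneOn Dw (Set.Icc (0 : ℝ) 1) ∧
    Dw 1 = 1 := by

  have h0 : (0:ℝ) ∈ Set.Icc (0:ℝ) 1 := by constructor <;> norm_num
  refine ⟨?_, ?_, Dw_strictMono.monotoneOn, Dw_one⟩
  · intro μ hμ
    rcases eq_or_lt_of_le hμ.1 with h | h
    · rw [← h, Dw_zero]
    · have := Dw_strictMono h0 hμ h
      rw [Dw_zero] at this; linarith
  · intro μ hμ
    constructor
    · intro hD
      by_contra hne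
      have h : 0 < μ := lt_of_le_of_ne hμ.1 (Ne.symm hne)
      have := Dw_strictMono h0 hμ h
      rw [Dw_zero] at this; linarith
    · rintro rfl; exact Dw_zero
end
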